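/- If a linear endomorphism A of a finite-dimensional real vector space is diagonalizable with real eigenvalues, and v is a vector such that {e^{tA} v : t ∈ ℝ} is bounded, then A v = 0. -/

import Mathlib

/-- The exponential of a linear endomorphism of a finite-dimensional real vector space,
computed through matrices with respect to a basis (the result is basis-independent). -/
noncomputable def expEnd {V : Type*} [AddCommGroup V] [Module ℝ V] [FiniteDimensional ℝ V]
    (A : V →ₗ[ℝ] V) : V →ₗ[ℝ] V :=
  (Matrix.toLin (Module.finBasis ℝ V) (Module.finBasis ℝ V))
    (NormedSpace.exp ((LinearMap.toMatrix (Module.finBasis ℝ V) (Module.finBasis ℝ V)) A))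

attribute [local instance] Matrix.linftyOpNormedRing Matrix.linftyOpNormedAlgebra
attribute [local instance] Matrix.linftyOpNormedAddCommGroup Matrix.linftyOpNormedSpace

/-- `expEnd` is independent of the chosen basis. -/
theorem expEnd_eq_basis {V : Type*} [AddCommGroup V] [Module ℝ V] [FiniteDimensional ℝ V]
    {ι : Type*} [Fintype ι] [DecidableEq ι] (b : Module.Basis ι ℝ V) (A : V →ₗ[ℝ] V) :
    expEnd A = Matrix.toLin b b (NormedSpace.exp (LinearMap.toMatrix b b A)) := by
  classical
  set fb := Module.finBasis ℝ V
  let ψ : Matrix ι ι ℝ ≃ₐ[ℝ] Matrix (Fin (Module.finrank ℝ V)) (Fin (Module.finrank ℝ V)) ℝ :=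
    (Matrix.toLinAlgEquiv b).trans (LinearMap.toMatrixAlgEquiv fb)
  have hψc : Continuous ψ := LinearMap.continuous_of_finiteDimensional ψ.toLinearMap
  have hψ : ∀ M : Matrix ι ι ℝ,
      ψ M = LinearMap.toMatrix fb fb (Matrix.toLin b b M) := fun M => by
    simp [ψ, LinearMap.toMatrixAlgEquiv, Matrix.toLinAlgEquiv]
  have h1 : LinearMap.toMatrix fb fb A = ψ (LinearMap.toMatrix b b A) := by
    rw [hψ, Matrix.toLin_toMatrix]
  have h2 : NormedSpace.exp (ψ (LinearMap.toMatrix b b A))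
      = ψ (NormedSpace.exp (LinearMap.toMatrix b b A)) :=
    (NormedSpace.map_exp ψ hψc _).symm
  rw [expEnd, h1, h2, hψ, Matrix.toLin_toMatrix]

/-- If `A` is diagonalizable with real eigenvalues and `{e^{tA} v : t ∈ ℝ}` is bounded,
then `A v = 0`. -/
theorem apply_eq_zero_of_bounded_exp_orbit {V : Type*} [NormedAddCommGroup V]
    [NormedSpace ℝ V] [FiniteDimensional ℝ V] (A : V →ₗ[ℝ] V) {ι : Type*} [Fintype ι]
    (b : Module.Basis ι ℝ V) (μ : ι → ℝ) (hdiag : ∀ i, A (b i) = μ i • b i) (v : V)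
    (hbdd : Bornology.IsBounded {x : V | ∃ t : ℝ, x = expEnd (t • A) v}) :
    A v = 0 := by
  classical
  set c : ι → ℝ := fun i => b.repr v i with hc
  -- the matrix of t • A is diagonal
  have hmat : ∀ t : ℝ, LinearMap.toMatrix b b (t • A) = Matrix.diagonal (fun i => t * μ i) := by
    intro t
    ext i j
    rw [LinearMap.toMatrix_apply]
    by_cases h : i = j
    · simp [hdiag j, Matrix.diagonal, Finsupp.single_apply, h, mul_comm]
    · simp [hdiag j, Matrix.diagonal, Finsupp.single_apply, h, Ne.symm h, mul_comm]
  -- explicit formula for the orbit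
  have horbit : ∀ t : ℝ, expEnd (t • A) v = ∑ i, (Real.exp (t * μ i) * c i) • b i := by
    intro t
    rw [expEnd_eq_basis b, hmat t, Matrix.exp_diagonal, Matrix.toLin_apply]
    refine Finset.sum_congr rfl fun i _ => ?_
    rw [Matrix.mulVec_diagonal]
    congr 1
    simp [Real.exp_eq_exp_ℝ, Pi.exp_def, hc]
  -- boundedness gives a uniform bound on each coordinate
  obtain ⟨C, hC⟩ := hbdd.exists_norm_le
  have key : ∀ i, μ i * c i = 0 := by
    intro i
    by_contra h
    have hci : c i ≠ 0 := fun h0 => h (by simp [h0])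
    have hμi : μ i ≠ 0 := fun h0 => h (by simp [h0])
    have hcoord : ∀ t : ℝ, Real.exp (t * μ i) * c i = b.repr (expEnd (t • A) v) i := by
      intro t
      rw [horbit t]
      simp [Finsupp.single_apply, Finset.sum_apply']
    set f : V →L[ℝ] ℝ := LinearMap.toContinuousLinearMap (b.coord i)
    have hbound : ∀ t : ℝ, Real.exp (t * μ i) * |c i| ≤ ‖f‖ * C := by
      intro t
      have h1 : |Real.exp (t * μ i) * c i| ≤ ‖f‖ * C := by
        have h2 : f (expEnd (t • A) v) = Real.exp (t * μ i) * c i := by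
          rw [hcoord t]; rfl
        calc |Real.exp (t * μ i) * c i| = ‖f (expEnd (t • A) v)‖ := by rw [h2]; rfl
          _ ≤ ‖f‖ * ‖expEnd (t • A) v‖ := f.le_opNorm _
          _ ≤ ‖f‖ * C := by
              exact mul_le_mul_of_nonneg_left (hC _ ⟨t, rfl⟩) (norm_nonneg f)
      rwa [abs_mul, abs_of_pos (Real.exp_pos _)] at h1
    set K := ‖f‖ * C
    have habs : 0 < |c i| := abs_pos.mpr hci
    have hK : 0 < K := lt_of_lt_of_le habs (by simpa using hbound 0)
    set s : ℝ := Real.log ((K + 1) / |c i|)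
    have := hbound (s / μ i)
    rw [div_mul_cancel₀ _ hμi, Real.exp_log (by positivity),
      div_mul_cancel₀ _ (ne_of_gt habs)] at this
    linarith
  -- conclude
  have hv : v = ∑ i, c i • b i := (b.sum_repr v).symm
  calc A v = ∑ i, c i • A (b i) := by rw [hv]; simp
    _ = ∑ i, (μ i * c i) • b i := by
        refine Finset.sum_congr rfl fun i _ => ?_
        rw [hdiag i, smul_smul, mul_comm]
    _ = 0 := by simp [key]
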